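/- Let A(X) be an acceptable subspace of C_b(X) and let P(X) denote the set of Borel probability measures on X. Then the topologies τ_A and τ_b coincide on P(X). -/

import Mathlib

open MeasureTheory Filter Topology BoundedContinuousFunction ENNReal NNReal

noncomputable section

namespace AMPaper

variable (X : Type*) [TopologicalSpace X] [MeasurableSpace X]

/-- The topology `τ_b` on the space of finite nonnegative Borel measures:
the weak topology induced by the pairings `μ ↦ ∫ g dμ`, `g ∈ C_b(X)`. -/
def taub : TopologicalSpace (FiniteMeasure X) :=
  ⨅ g : X →ᵇ ℝ,
    TopologicalSpace.induced (fun μ : FiniteMeasure X => ∫ x, g x ∂(μ : Measure X)) inferInstance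

/-- The topology `τ_A` induced by the pairings with functions from `A ⊆ C_b(X)`. -/
def tauA (A : Set (X →ᵇ ℝ)) : TopologicalSpace (FiniteMeasure X) :=
  ⨅ g ∈ A,
    TopologicalSpace.induced (fun μ : FiniteMeasure X => ∫ x, g x ∂(μ : Measure X)) inferInstance

variable {X}

/-- A closed linear sublattice of `C_b(X)`. -/
structure IsClosedSublattice (A : Set (X →ᵇ ℝ)) : Prop where
  isClosed : IsClosed A
  zero_mem : (0 : X →ᵇ ℝ) ∈ A
  add_mem : ∀ ⦃f g : X →ᵇ ℝ⦄, f ∈ A → g ∈ A → f + g ∈ A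
  smul_mem : ∀ (c : ℝ) ⦃f : X →ᵇ ℝ⦄, f ∈ A → c • f ∈ A
  sup_mem : ∀ ⦃f g h : X →ᵇ ℝ⦄, f ∈ A → g ∈ A → (∀ x, h x = max (f x) (g x)) → h ∈ A
  inf_mem : ∀ ⦃f g h : X →ᵇ ℝ⦄, f ∈ A → g ∈ A → (∀ x, h x = min (f x) (g x)) → h ∈ A

/-- An acceptable subspace of `C_b(X)`: a closed linear sublattice satisfying
the separation property (A2). -/
structure IsAcceptable (A : Set (X →ᵇ ℝ)) extends IsClosedSublattice A : Prop where
  sep : ∀ F : Set X, IsClosed F → ∀ x ∉ F, ∃ g ∈ A,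
    (∀ y, 0 ≤ g y) ∧ (∀ y, g y ≤ 1) ∧ g x = 1 ∧ ∀ y ∈ F, g y = 0

set_option linter.unusedSectionVars false

def supSeq (f : ℕ → X →ᵇ ℝ) : ℕ → X →ᵇ ℝ
  | 0 => f 0
  | n + 1 => supSeq f n ⊔ f (n + 1)

lemma supSeq_mem {A : Set (X →ᵇ ℝ)} (hA : IsClosedSublattice A) {f : ℕ → X →ᵇ ℝ}
    (hf : ∀ n, f n ∈ A) : ∀ n, supSeq f n ∈ A := by
  intro n
  induction n with
  | zero => exact hf 0
  | succ n ih => exact hA.sup_mem ih (hf (n + 1)) (fun x => rfl)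

lemma le_supSeq {f : ℕ → X →ᵇ ℝ} {m n : ℕ} (h : m ≤ n) (x : X) :
    f m x ≤ supSeq f n x := by
  induction n with
  | zero => simp [Nat.le_zero.mp h, supSeq]
  | succ n ih =>
    rcases Nat.lt_or_ge m (n + 1) with h' | h'
    · exact le_trans (ih (Nat.lt_succ_iff.mp h')) (le_max_left _ _)
    · have : m = n + 1 := le_antisymm h h'
      subst this
      exact le_max_right _ _

lemma supSeq_le {f : ℕ → X →ᵇ ℝ} {c : ℝ} (n : ℕ) (x : X)
    (h : ∀ m, f m x ≤ c) : supSeq f n x ≤ c := by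
  induction n with
  | zero => exact h 0
  | succ n ih => exact max_le ih (h (n + 1))

lemma supSeq_nonneg {f : ℕ → X →ᵇ ℝ} (n : ℕ) (x : X)
    (h : ∀ m, 0 ≤ f m x) : 0 ≤ supSeq f n x :=
  le_trans (h 0) (le_supSeq (Nat.zero_le n) x)

lemma supSeq_eq_zero {f : ℕ → X →ᵇ ℝ} (n : ℕ) (x : X)
    (h : ∀ m, f m x = 0) : supSeq f n x = 0 :=
  le_antisymm (supSeq_le n x (fun m => (h m).le))
    (supSeq_nonneg n x (fun m => (h m).ge))

lemma supSeq_mono {f : ℕ → X →ᵇ ℝ} (x : X) :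
    Monotone (fun n => supSeq f n x) :=
  monotone_nat_of_le_succ (fun n => le_max_left _ _)

/-- For an open set `U`, there is a monotone sequence of functions from `A`,
taking values in `[0,1]`, vanishing off `U`, whose pointwise sup is the indicator
of `U`. -/
lemma exists_approx_seq [SecondCountableTopology X] {A : Set (X →ᵇ ℝ)}
    (hA : IsAcceptable A) {U : Set X} (hU : IsOpen U) :
    ∃ g : ℕ → X →ᵇ ℝ, (∀ n, g n ∈ A) ∧ (∀ n x, 0 ≤ g n x) ∧ (∀ n x, g n x ≤ 1) ∧
      (∀ n x, x ∉ U → g n x = 0) ∧ (∀ x, Monotone (fun n => g n x)) ∧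
      ∀ x, (⨆ n, ENNReal.ofReal (g n x)) = U.indicator (fun _ => (1 : ℝ≥0∞)) x := by
  classical
  set P : Set (X →ᵇ ℝ) :=
    {g | g ∈ A ∧ (∀ y, 0 ≤ g y) ∧ (∀ y, g y ≤ 1) ∧ ∀ y, y ∉ U → g y = 0} with hP
  have h0P : (0 : X →ᵇ ℝ) ∈ P := by
    refine ⟨hA.zero_mem, ?_, ?_, ?_⟩ <;> intros <;> simp
  set V : ℕ → P → Set X := fun k i => {x | 1 - 1 / (k + 1 : ℝ) < i.1 x} with hV
  have hVopen : ∀ k i, IsOpen (V k i) := fun k i =>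
    isOpen_lt continuous_const i.1.continuous
  have hVsub : ∀ k i, V k i ⊆ U := by
    intro k i x hx
    by_contra hxU
    have h0 : i.1 x = 0 := i.2.2.2.2 x hxU
    have h1 : (0:ℝ) ≤ 1 / (k + 1 : ℝ) := by positivity
    have h1' : 1 / (k + 1 : ℝ) ≤ 1 := by
      rw [div_le_one (by positivity)]; linarith
    simp only [hV, Set.mem_setOf_eq, h0] at hx
    linarith
  have hcov : ∀ k, U ⊆ ⋃ i, V k i := by
    intro k x hx
    obtain ⟨g, hgA, hg0, hg1, hgx, hgF⟩ := hA.sep Uᶜ hU.isClosed_compl x (by simpa using hx)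
    have hgP : g ∈ P := ⟨hgA, hg0, hg1, fun y hy => hgF y (by simpa using hy)⟩
    refine Set.mem_iUnion.mpr ⟨⟨g, hgP⟩, ?_⟩
    simp only [hV, Set.mem_setOf_eq, hgx]
    have : (0:ℝ) < 1 / (k + 1 : ℝ) := by positivity
    linarith
  choose T hTc hTeq using fun k =>
    TopologicalSpace.isOpen_iUnion_countable (V k) (hVopen k)
  set Tall : Set P := insert ⟨0, h0P⟩ (⋃ k, T k) with hTall
  have hTallc : Tall.Countable := (Set.countable_iUnion hTc).insert _
  have hTallne : Tall.Nonempty := ⟨_, Set.mem_insert _ _⟩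
  obtain ⟨f, hf⟩ := hTallc.exists_eq_range hTallne
  set g : ℕ → X →ᵇ ℝ := supSeq (fun n => (f n).1) with hg
  have hmemP : ∀ n, (f n).1 ∈ P := fun n => (f n).2
  refine ⟨g, ?_, ?_, ?_, ?_, ?_, ?_⟩
  · exact supSeq_mem hA.toIsClosedSublattice (fun n => (hmemP n).1)
  · exact fun n x => supSeq_nonneg n x (fun m => (hmemP m).2.1 x)
  · exact fun n x => supSeq_le n x (fun m => (hmemP m).2.2.1 x)
  · exact fun n x hx => supSeq_eq_zero n x (fun m => (hmemP m).2.2.2 x hx)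
  · exact fun x => supSeq_mono x
  · intro x
    by_cases hx : x ∈ U
    · rw [Set.indicator_of_mem hx]
      apply le_antisymm
      · exact iSup_le fun n => by
          simpa using ENNReal.ofReal_le_ofReal (supSeq_le n x (fun m => (hmemP m).2.2.1 x))
      · -- 1 ≤ ⨆
        have key : ∀ k : ℕ, ENNReal.ofReal (1 - 1 / (k + 1 : ℝ)) ≤ ⨆ n, ENNReal.ofReal (g n x) := by
          intro k
          have hxcov : x ∈ ⋃ i ∈ T k, V k i := by
            rw [hTeq k]; exact hcov k hx
          obtain ⟨i, hiT, hxV⟩ := Set.mem_iUnion₂.mp hxcov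
          have hiTall : i ∈ Tall := Set.mem_insert_iff.mpr (Or.inr (Set.mem_iUnion.mpr ⟨k, hiT⟩))
          rw [hf] at hiTall
          obtain ⟨m, hm⟩ := hiTall
          have h1 : 1 - 1 / (k + 1 : ℝ) < (f m).1 x := by rw [hm]; exact hxV
          have h2 : (f m).1 x ≤ g m x := le_supSeq (f := fun n => (f n).1) le_rfl x
          calc ENNReal.ofReal (1 - 1 / (k + 1 : ℝ)) ≤ ENNReal.ofReal (g m x) :=
                ENNReal.ofReal_le_ofReal (by linarith)
            _ ≤ ⨆ n, ENNReal.ofReal (g n x) := le_iSup (fun n => ENNReal.ofReal (g n x)) m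
        have htend : Tendsto (fun k : ℕ => ENNReal.ofReal (1 - 1 / (k + 1 : ℝ))) atTop
            (𝓝 (ENNReal.ofReal 1)) := by
          apply (ENNReal.continuous_ofReal.tendsto 1).comp
          have : Tendsto (fun n : ℕ => 1 / ((n : ℝ) + 1)) atTop (𝓝 0) :=
            tendsto_one_div_add_atTop_nhds_zero_nat
          simpa using (tendsto_const_nhds (x := (1:ℝ))).sub this
        simpa using le_of_tendsto htend (Eventually.of_forall key)
    · rw [Set.indicator_of_notMem hx]
      simp only [hg]
      refine le_antisymm (iSup_le fun n => ?_) (zero_le')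
      rw [supSeq_eq_zero n x (fun m => (hmemP m).2.2.2 x hx)]
      simp

/-- Pointwise bound: a `[0,1]`-valued function vanishing off `U` is below the indicator. -/
lemma ofReal_le_indicator {g : X →ᵇ ℝ} {U : Set X} (hg1 : ∀ x, g x ≤ 1)
    (hg0 : ∀ x, x ∉ U → g x = 0) (x : X) :
    ENNReal.ofReal (g x) ≤ U.indicator (fun _ => (1 : ℝ≥0∞)) x := by
  by_cases hx : x ∈ U
  · rw [Set.indicator_of_mem hx]
    simpa using ENNReal.ofReal_le_ofReal (hg1 x)
  · rw [Set.indicator_of_notMem hx, hg0 x hx]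
    simp

lemma lintegral_ofReal_eq {g : X →ᵇ ℝ} (hg : ∀ x, 0 ≤ g x) (P : Measure X)
    [OpensMeasurableSpace X] [IsFiniteMeasure P] :
    ∫⁻ x, ENNReal.ofReal (g x) ∂P = ENNReal.ofReal (∫ x, g x ∂P) :=
  (ofReal_integral_eq_lintegral_ofReal (g.integrable P) (Eventually.of_forall hg)).symm

/-- Key eventual lower bound on the measures of an open set. -/
lemma eventually_lt_measure_open [BorelSpace X] [SecondCountableTopology X]
    {A : Set (X →ᵇ ℝ)} (hA : IsAcceptable A) {ι : Type*} {L : Filter ι}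
    {μ0 : FiniteMeasure X} {ν : ι → FiniteMeasure X}
    (hconv : ∀ g ∈ A, Tendsto (fun i => ∫ x, g x ∂(ν i : Measure X)) L
      (𝓝 (∫ x, g x ∂(μ0 : Measure X))))
    {U : Set X} (hU : IsOpen U) {r : ℝ≥0∞} (hr : r < (μ0 : Measure X) U) :
    ∀ᶠ i in L, r < (ν i : Measure X) U := by
  obtain ⟨g, hgA, hg0, hg1, hgU, hgmono, hgsup⟩ := exists_approx_seq hA hU
  have hmeas : ∀ n, Measurable fun x => ENNReal.ofReal (g n x) := fun n =>
    (g n).continuous.measurable.ennreal_ofReal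
  have hmono : Monotone (fun n (x : X) => ENNReal.ofReal (g n x)) := fun n m h x =>
    ENNReal.ofReal_le_ofReal (hgmono x h)
  have hsup : (μ0 : Measure X) U = ⨆ n, ∫⁻ x, ENNReal.ofReal (g n x) ∂(μ0 : Measure X) := by
    rw [← lintegral_iSup hmeas hmono]
    rw [← MeasureTheory.lintegral_indicator_one hU.measurableSet]
    congr 1
    ext x
    rw [hgsup x]
    rfl
  rw [hsup] at hr
  obtain ⟨n, hn⟩ := lt_iSup_iff.mp hr
  rw [lintegral_ofReal_eq (hg0 n) _] at hn
  have hrne : r ≠ ∞ := hn.ne_top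
  have hrt : r.toReal < ∫ x, g n x ∂(μ0 : Measure X) :=
    (ENNReal.lt_ofReal_iff_toReal_lt hrne).mp hn
  filter_upwards [(hconv (g n) (hgA n)).eventually (eventually_gt_nhds hrt)] with i hi
  have h1 : ENNReal.ofReal (∫ x, g n x ∂(ν i : Measure X)) ≤ (ν i : Measure X) U := by
    rw [← lintegral_ofReal_eq (hg0 n) _]
    calc ∫⁻ x, ENNReal.ofReal (g n x) ∂(ν i : Measure X)
        ≤ ∫⁻ x, U.indicator (fun _ => (1 : ℝ≥0∞)) x ∂(ν i : Measure X) :=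
          lintegral_mono (ofReal_le_indicator (hg1 n) (hgU n))
      _ = (ν i : Measure X) U := by
          exact MeasureTheory.lintegral_indicator_one (μ := (ν i : Measure X))
            hU.measurableSet
  have h2 : r < ENNReal.ofReal (∫ x, g n x ∂(ν i : Measure X)) := by
    calc r = ENNReal.ofReal r.toReal := (ENNReal.ofReal_toReal hrne).symm
      _ < ENNReal.ofReal (∫ x, g n x ∂(ν i : Measure X)) :=
          (ENNReal.ofReal_lt_ofReal_iff (lt_of_le_of_lt ENNReal.toReal_nonneg hi)).mpr hi
  exact h2.trans_le h1



lemma layer_count {a M c : ℝ} (ha0 : 0 ≤ a) (haM : a ≤ M) (hc : 0 < c) (n : ℕ)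
    (hnc : M < n * c) :
    a ≤ ((((Finset.range n).filter (fun k : ℕ => ((k : ℝ) + 1) * c < a)).card : ℝ) + 1) * c ∧
    ((((Finset.range n).filter (fun k : ℕ => ((k : ℝ) + 1) * c < a)).card : ℝ)) * c ≤ a := by
  classical
  set s := (Finset.range n).filter (fun k : ℕ => ((k : ℝ) + 1) * c < a) with hs
  set m := s.card with hm
  have hmn : m ≤ n := by
    simpa using Finset.card_filter_le (Finset.range n) _
  constructor
  · -- a ≤ (m+1) c
    rcases eq_or_lt_of_le hmn with hEq | hlt
    · -- m = n
      have : a ≤ M := haM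
      have : ((m : ℝ) + 1) * c = (n : ℝ) * c + c := by rw [hEq]; ring
      nlinarith
    · -- m < n : show ¬ (m+1)c < a
      by_contra hcon
      push_neg at hcon
      have hsub : Finset.range (m + 1) ⊆ s := by
        intro k hk
        have hk' : k < m + 1 := Finset.mem_range.mp hk
        refine Finset.mem_filter.mpr ⟨Finset.mem_range.mpr (lt_of_lt_of_le hk' hlt), ?_⟩
        have h1 : ((k : ℝ) + 1) ≤ ((m : ℝ) + 1) := by
          have : (k : ℝ) ≤ m := by exact_mod_cast Nat.lt_succ_iff.mp hk'
          linarith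
        calc ((k : ℝ) + 1) * c ≤ ((m : ℝ) + 1) * c := by nlinarith
          _ < a := hcon
      have := Finset.card_le_card hsub
      simp [hm] at this
  · -- m c ≤ a
    rcases Nat.eq_zero_or_pos m with h0 | hpos
    · simp [h0]; exact ha0
    · have hne : s.Nonempty := Finset.card_pos.mp hpos
      set k0 := s.max' hne with hk0
      have hk0mem : k0 ∈ s := s.max'_mem hne
      have hk0a : ((k0 : ℝ) + 1) * c < a := (Finset.mem_filter.mp hk0mem).2
      have hcard : m ≤ k0 + 1 := by
        have hsub : s ⊆ Finset.range (k0 + 1) := by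
          intro k hk
          exact Finset.mem_range.mpr (Nat.lt_succ_iff.mpr (s.le_max' k hk))
        simpa using Finset.card_le_card hsub
      have : (m : ℝ) ≤ (k0 : ℝ) + 1 := by exact_mod_cast hcard
      nlinarith


lemma sum_indicator_eq (h : X →ᵇ ℝ) (c : ℝ) (n : ℕ) (x : X) :
    ∑ k ∈ Finset.range n, ({y | ((k : ℝ) + 1) * c < h y}).indicator
        (fun _ => ENNReal.ofReal c) x
      = (((Finset.range n).filter (fun k : ℕ => ((k : ℝ) + 1) * c < h x)).card : ℝ≥0∞)
          * ENNReal.ofReal c := by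
  classical
  simp only [Set.indicator_apply, Set.mem_setOf_eq]
  rw [← Finset.sum_filter, Finset.sum_const, nsmul_eq_mul]

lemma pointwise_upper {h : X →ᵇ ℝ} (hh0 : ∀ x, 0 ≤ h x) {M c : ℝ} (hhM : ∀ x, h x ≤ M)
    (hc : 0 < c) {n : ℕ} (hnc : M < n * c) (x : X) :
    ENNReal.ofReal (h x) ≤ ENNReal.ofReal c +
      ∑ k ∈ Finset.range n, ({y | ((k : ℝ) + 1) * c < h y}).indicator
        (fun _ => ENNReal.ofReal c) x := by
  rw [sum_indicator_eq]
  set m := ((Finset.range n).filter (fun k : ℕ => ((k : ℝ) + 1) * c < h x)).card with hm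
  have key := (layer_count (hh0 x) (hhM x) hc n hnc).1
  calc ENNReal.ofReal (h x) ≤ ENNReal.ofReal (((m : ℝ) + 1) * c) :=
        ENNReal.ofReal_le_ofReal key
    _ = ENNReal.ofReal ((m : ℝ) + 1) * ENNReal.ofReal c := by
        rw [ENNReal.ofReal_mul (by positivity)]
    _ = ((m : ℝ≥0∞) + 1) * ENNReal.ofReal c := by
        congr 1
        rw [show ((m : ℝ) + 1) = ((m + 1 : ℕ) : ℝ) by push_cast; ring, ENNReal.ofReal_natCast]
        push_cast
        ring
    _ = ENNReal.ofReal c + (m : ℝ≥0∞) * ENNReal.ofReal c := by ring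

lemma pointwise_lower {h : X →ᵇ ℝ} (hh0 : ∀ x, 0 ≤ h x) {M c : ℝ} (hhM : ∀ x, h x ≤ M)
    (hc : 0 < c) {n : ℕ} (hnc : M < n * c) (x : X) :
    ∑ k ∈ Finset.range n, ({y | ((k : ℝ) + 1) * c < h y}).indicator
        (fun _ => ENNReal.ofReal c) x ≤ ENNReal.ofReal (h x) := by
  rw [sum_indicator_eq]
  set m := ((Finset.range n).filter (fun k : ℕ => ((k : ℝ) + 1) * c < h x)).card with hm
  have key := (layer_count (hh0 x) (hhM x) hc n hnc).2
  calc (m : ℝ≥0∞) * ENNReal.ofReal c = ENNReal.ofReal ((m : ℝ) * c) := by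
        rw [ENNReal.ofReal_mul (by positivity), ENNReal.ofReal_natCast]
    _ ≤ ENNReal.ofReal (h x) := ENNReal.ofReal_le_ofReal key

lemma eventually_integral_le [BorelSpace X] [SecondCountableTopology X]
    {A : Set (X →ᵇ ℝ)} (hA : IsAcceptable A) {ι : Type*} {L : Filter ι}
    {μ0 : FiniteMeasure X} {ν : ι → FiniteMeasure X}
    (hμ0 : IsProbabilityMeasure (μ0 : Measure X))
    (hν : ∀ i, IsProbabilityMeasure ((ν i : Measure X)))
    (hconv : ∀ g ∈ A, Tendsto (fun i => ∫ x, g x ∂(ν i : Measure X)) L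
      (𝓝 (∫ x, g x ∂(μ0 : Measure X))))
    (h : X →ᵇ ℝ) (hh0 : ∀ x, 0 ≤ h x) {ε : ℝ} (hε : 0 < ε) :
    ∀ᶠ i in L, ∫ x, h x ∂(μ0 : Measure X) ≤ ∫ x, h x ∂(ν i : Measure X) + ε := by
  classical
  set M : ℝ := ‖h‖ with hM
  have hM0 : 0 ≤ M := norm_nonneg h
  have hhM : ∀ x, h x ≤ M := fun x =>
    le_trans (le_abs_self _) ((Real.norm_eq_abs _ ▸ h.norm_coe_le_norm x))
  obtain ⟨n, hn⟩ := exists_nat_gt (2 * (M + 1) / ε)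
  have hnpos : 0 < (n : ℝ) := lt_of_le_of_lt (by positivity) hn
  set c : ℝ := (M + 1) / n with hc
  have hcpos : 0 < c := by positivity
  have hnc : (n : ℝ) * c = M + 1 := by rw [hc]; field_simp [hnpos.ne']
  have hMnc : M < n * c := by rw [hnc]; linarith
  have hcε : c ≤ ε / 2 := by
    rw [hc, div_le_iff₀ hnpos]
    rw [div_lt_iff₀ hε] at hn
    nlinarith
  set δ : ℝ := ε / (2 * (M + 1)) with hδdef
  have hδ : 0 < δ := by positivity
  set U : ℕ → Set X := fun k => {y | ((k : ℝ) + 1) * c < h y} with hUdef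
  have hUopen : ∀ k, IsOpen (U k) := fun k => isOpen_lt continuous_const h.continuous
  set c' : ℝ≥0∞ := ENNReal.ofReal c with hc'
  -- eventual measure bounds
  have ev_k : ∀ k ∈ Finset.range n,
      ∀ᶠ i in L, (μ0 : Measure X) (U k) ≤ (ν i : Measure X) (U k) + ENNReal.ofReal δ := by
    intro k _
    by_cases hcase : (μ0 : Measure X) (U k) ≤ ENNReal.ofReal δ
    · exact Eventually.of_forall fun i => le_trans hcase (by
        simpa using le_add_left (le_refl (ENNReal.ofReal δ)) ((ν i : Measure X) (U k)))
    · push_neg at hcase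
      have hne0 : (μ0 : Measure X) (U k) ≠ 0 :=
        fun h0 => by simp [h0] at hcase
      have hrlt : (μ0 : Measure X) (U k) - ENNReal.ofReal δ < (μ0 : Measure X) (U k) :=
        ENNReal.sub_lt_self (measure_ne_top _ _) hne0
          (by simpa [ENNReal.ofReal_pos] using hδ)
      filter_upwards [eventually_lt_measure_open hA hconv (hUopen k) hrlt] with i hi
      exact tsub_le_iff_right.mp hi.le
  filter_upwards [(Filter.eventually_all_finset (Finset.range n)).mpr ev_k] with i hi
  -- main chain
  have step2 : ∫⁻ x, ENNReal.ofReal (h x) ∂(μ0 : Measure X) ≤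
      c' + ∑ k ∈ Finset.range n, c' * (μ0 : Measure X) (U k) := by
    calc ∫⁻ x, ENNReal.ofReal (h x) ∂(μ0 : Measure X)
        ≤ ∫⁻ x, (c' + ∑ k ∈ Finset.range n, (U k).indicator (fun _ => c') x)
            ∂(μ0 : Measure X) :=
          lintegral_mono (fun x => pointwise_upper hh0 hhM hcpos hMnc x)
      _ = c' + ∑ k ∈ Finset.range n, c' * (μ0 : Measure X) (U k) := by
          rw [lintegral_add_left measurable_const, lintegral_const, measure_univ, mul_one,
            lintegral_finset_sum _ (fun k _ =>
              measurable_const.indicator (hUopen k).measurableSet)]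
          congr 1
          refine Finset.sum_congr rfl fun k _ => ?_
          rw [lintegral_indicator_const (hUopen k).measurableSet]
  have step4 : ∑ k ∈ Finset.range n, c' * (ν i : Measure X) (U k) ≤
      ∫⁻ x, ENNReal.ofReal (h x) ∂(ν i : Measure X) := by
    calc ∑ k ∈ Finset.range n, c' * (ν i : Measure X) (U k)
        = ∫⁻ x, (∑ k ∈ Finset.range n, (U k).indicator (fun _ => c') x)
            ∂(ν i : Measure X) := by
          rw [lintegral_finset_sum _ (fun k _ =>
            measurable_const.indicator (hUopen k).measurableSet)]
          refine (Finset.sum_congr rfl fun k _ => ?_).symm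
          rw [lintegral_indicator_const (hUopen k).measurableSet]
      _ ≤ ∫⁻ x, ENNReal.ofReal (h x) ∂(ν i : Measure X) :=
          lintegral_mono (fun x => pointwise_lower hh0 hhM hcpos hMnc x)
  have step3 : ∑ k ∈ Finset.range n, c' * (μ0 : Measure X) (U k) ≤
      (∑ k ∈ Finset.range n, c' * (ν i : Measure X) (U k)) + ENNReal.ofReal (ε / 2) := by
    calc ∑ k ∈ Finset.range n, c' * (μ0 : Measure X) (U k)
        ≤ ∑ k ∈ Finset.range n, (c' * (ν i : Measure X) (U k) + c' * ENNReal.ofReal δ) := by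
          refine Finset.sum_le_sum fun k hk => ?_
          rw [← mul_add]
          exact mul_le_mul_right (hi k hk) c'
      _ = (∑ k ∈ Finset.range n, c' * (ν i : Measure X) (U k))
            + (n : ℝ≥0∞) * (c' * ENNReal.ofReal δ) := by
          rw [Finset.sum_add_distrib, Finset.sum_const, Finset.card_range, nsmul_eq_mul]
      _ = (∑ k ∈ Finset.range n, c' * (ν i : Measure X) (U k)) + ENNReal.ofReal (ε / 2) := by
          congr 1
          rw [hc', ← ENNReal.ofReal_mul hcpos.le, ← ENNReal.ofReal_natCast n,
            ← ENNReal.ofReal_mul (by positivity)]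
          congr 1
          rw [← mul_assoc, hnc, hδdef]
          field_simp
  -- put everything together
  have main : ENNReal.ofReal (∫ x, h x ∂(μ0 : Measure X)) ≤
      ENNReal.ofReal (∫ x, h x ∂(ν i : Measure X) + ε) := by
    calc ENNReal.ofReal (∫ x, h x ∂(μ0 : Measure X))
        = ∫⁻ x, ENNReal.ofReal (h x) ∂(μ0 : Measure X) :=
          (lintegral_ofReal_eq hh0 _).symm
      _ ≤ c' + ∑ k ∈ Finset.range n, c' * (μ0 : Measure X) (U k) := step2
      _ ≤ c' + ((∑ k ∈ Finset.range n, c' * (ν i : Measure X) (U k))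
            + ENNReal.ofReal (ε / 2)) := add_le_add_right step3 c'
      _ ≤ c' + (∫⁻ x, ENNReal.ofReal (h x) ∂(ν i : Measure X) + ENNReal.ofReal (ε / 2)) :=
          add_le_add_right (add_le_add_left step4 _) c'
      _ = ∫⁻ x, ENNReal.ofReal (h x) ∂(ν i : Measure X) + (c' + ENNReal.ofReal (ε / 2)) := by
          ring
      _ ≤ ∫⁻ x, ENNReal.ofReal (h x) ∂(ν i : Measure X)
            + (ENNReal.ofReal (ε / 2) + ENNReal.ofReal (ε / 2)) :=
          add_le_add_right (add_le_add_left (ENNReal.ofReal_le_ofReal hcε) _) _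
      _ = ENNReal.ofReal (∫ x, h x ∂(ν i : Measure X) + ε) := by
          rw [lintegral_ofReal_eq hh0 _, ← ENNReal.ofReal_add (by positivity) (by positivity),
            ← ENNReal.ofReal_add (integral_nonneg (fun x => hh0 x)) (by positivity)]
          congr 1
          ring
  have hrhs : 0 ≤ ∫ x, h x ∂(ν i : Measure X) + ε :=
    add_nonneg (integral_nonneg (fun x => hh0 x)) hε.le
  exact (ENNReal.ofReal_le_ofReal_iff hrhs).mp main


lemma tendsto_integral_of_acceptable [BorelSpace X] [SecondCountableTopology X]
    {A : Set (X →ᵇ ℝ)} (hA : IsAcceptable A) {ι : Type*} {L : Filter ι}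
    {μ0 : FiniteMeasure X} {ν : ι → FiniteMeasure X}
    (hμ0 : IsProbabilityMeasure (μ0 : Measure X))
    (hν : ∀ i, IsProbabilityMeasure ((ν i : Measure X)))
    (hconv : ∀ g ∈ A, Tendsto (fun i => ∫ x, g x ∂(ν i : Measure X)) L
      (𝓝 (∫ x, g x ∂(μ0 : Measure X))))
    (f : X →ᵇ ℝ) :
    Tendsto (fun i => ∫ x, f x ∂(ν i : Measure X)) L (𝓝 (∫ x, f x ∂(μ0 : Measure X))) := by
  rw [Metric.tendsto_nhds]
  intro ε hε
  have hbound : ∀ x, -‖f‖ ≤ f x ∧ f x ≤ ‖f‖ := fun x => by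
    have := f.norm_coe_le_norm x
    rw [Real.norm_eq_abs, abs_le] at this
    exact this
  set h₁ : X →ᵇ ℝ := f + BoundedContinuousFunction.const X ‖f‖ with hh₁
  set h₂ : X →ᵇ ℝ := BoundedContinuousFunction.const X ‖f‖ - f with hh₂
  have h₁nn : ∀ x, 0 ≤ h₁ x := fun x => by
    simp only [hh₁, BoundedContinuousFunction.coe_add, Pi.add_apply,
      BoundedContinuousFunction.const_apply]
    linarith [(hbound x).1]
  have h₂nn : ∀ x, 0 ≤ h₂ x := fun x => by
    simp only [hh₂, BoundedContinuousFunction.coe_sub, Pi.sub_apply,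
      BoundedContinuousFunction.const_apply]
    linarith [(hbound x).2]
  have int₁ : ∀ (P : Measure X) [IsProbabilityMeasure P],
      ∫ x, h₁ x ∂P = (∫ x, f x ∂P) + ‖f‖ := by
    intro P _
    simp only [hh₁, BoundedContinuousFunction.coe_add, Pi.add_apply,
      BoundedContinuousFunction.const_apply]
    rw [integral_add (f.integrable P) (integrable_const _), integral_const]
    simp
  have int₂ : ∀ (P : Measure X) [IsProbabilityMeasure P],
      ∫ x, h₂ x ∂P = ‖f‖ - (∫ x, f x ∂P) := by
    intro P _
    simp only [hh₂, BoundedContinuousFunction.coe_sub, Pi.sub_apply,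
      BoundedContinuousFunction.const_apply]
    rw [integral_sub (integrable_const _) (f.integrable P), integral_const]
    simp
  have hε2 : 0 < ε / 2 := by linarith
  filter_upwards [eventually_integral_le hA hμ0 hν hconv h₁ h₁nn hε2,
    eventually_integral_le hA hμ0 hν hconv h₂ h₂nn hε2] with i H1 H2
  rw [int₁ (μ0 : Measure X), int₁ (ν i : Measure X)] at H1
  rw [int₂ (μ0 : Measure X), int₂ (ν i : Measure X)] at H2
  rw [Real.dist_eq, abs_sub_lt_iff]
  constructor <;> linarith

lemma taub_eq_weakTopology [OpensMeasurableSpace X] :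
    taub X = (inferInstance : TopologicalSpace (FiniteMeasure X)) := by
  apply le_antisymm
  · rw [le_iff_nhds]
    intro μ
    have hnh : @nhds _ (taub X) μ =
        ⨅ g : X →ᵇ ℝ, Filter.comap (fun ν : FiniteMeasure X => ∫ x, g x ∂(ν : Measure X))
          (𝓝 (∫ x, g x ∂(μ : Measure X))) := by
      rw [taub, _root_.nhds_iInf]
      exact iInf_congr fun g => nhds_induced _ _
    rw [hnh, ← tendsto_id']
    apply FiniteMeasure.tendsto_iff_forall_integral_tendsto.mpr
    intro f
    exact tendsto_iff_comap.mpr (iInf_le _ f)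
  · refine le_iInf fun g => ?_
    exact continuous_iff_le_induced.mp
      (FiniteMeasure.continuous_integral_boundedContinuousFunction g)


/-- A lower semicontinuous `ρ : X → [0,∞]` is admissible for `E` if `∫ ρ dμ ≥ 1` for all `μ ∈ E`. -/
def AdmissibleFun (ρ : X → ℝ≥0∞) (E : Set (FiniteMeasure X)) : Prop :=
  LowerSemicontinuous ρ ∧ ∀ μ ∈ E, 1 ≤ ∫⁻ x, ρ x ∂(μ : Measure X)

/-- The `M_p` modulus of a family of measures. -/
def Mmod (p : ℝ) (m : Measure X) (E : Set (FiniteMeasure X)) : ℝ≥0∞ :=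
  ⨅ (ρ : X → ℝ≥0∞) (_ : AdmissibleFun ρ E), ∫⁻ x, ρ x ^ p ∂m

/-- The continuous modulus `M_{p,c}^A`, with test functions nonnegative elements of `A`. -/
def McMod (p : ℝ) (A : Set (X →ᵇ ℝ)) (m : Measure X) (E : Set (FiniteMeasure X)) : ℝ≥0∞ :=
  ⨅ (g : X →ᵇ ℝ) (_ : g ∈ A ∧ (∀ x, 0 ≤ g x) ∧
      ∀ μ ∈ E, 1 ≤ ∫⁻ x, ENNReal.ofReal (g x) ∂(μ : Measure X)),
    ∫⁻ x, ENNReal.ofReal (g x) ^ p ∂m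

/-- A sequence of lower semicontinuous functions `ρ_j : X → [0,∞]` is an admissible sequence
for `E` if `liminf_j ∫ ρ_j dμ ≥ 1` for all `μ ∈ E`. -/
def AdmissibleSeq (ρ : ℕ → X → ℝ≥0∞) (E : Set (FiniteMeasure X)) : Prop :=
  (∀ j, LowerSemicontinuous (ρ j)) ∧
    ∀ μ ∈ E, 1 ≤ Filter.liminf (fun j => ∫⁻ x, ρ j x ∂(μ : Measure X)) Filter.atTop

/-- The approximation modulus `AM_p` of a family of measures. -/
def AMmod (p : ℝ) (m : Measure X) (E : Set (FiniteMeasure X)) : ℝ≥0∞ :=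
  ⨅ (ρ : ℕ → X → ℝ≥0∞) (_ : AdmissibleSeq ρ E),
    Filter.liminf (fun j => ∫⁻ x, ρ j x ^ p ∂m) Filter.atTop

/-- The continuous approximation modulus `AM_{p,c}^A`. -/
def AMcMod (p : ℝ) (A : Set (X →ᵇ ℝ)) (m : Measure X) (E : Set (FiniteMeasure X)) : ℝ≥0∞ :=
  ⨅ (g : ℕ → X →ᵇ ℝ) (_ : (∀ j, g j ∈ A ∧ ∀ x, 0 ≤ g j x) ∧
      ∀ μ ∈ E, 1 ≤ Filter.liminf
        (fun j => ∫⁻ x, ENNReal.ofReal (g j x) ∂(μ : Measure X)) Filter.atTop),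
    Filter.liminf (fun j => ∫⁻ x, ENNReal.ofReal (g j x) ^ p ∂m) Filter.atTop

/-- The `L^q(m)`-norm of a function `f : X → [0,∞]`. -/
def lqNorm (q : ℝ≥0∞) (m : Measure X) (f : X → ℝ≥0∞) : ℝ≥0∞ :=
  if q = ∞ then essSup f m else (∫⁻ x, f x ^ q.toReal ∂m) ^ (1 / q.toReal)

variable (X) in
/-- The `p`-content (depending on `p` only through the conjugate exponent `q`):
the supremum of the outer measures `η*(E)` over all plans `η` — finite Borel measures on
`(M^+(X), τ_b)` — whose barycenter `η^#` is absolutely continuous w.r.t. `m` with density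
of `L^q(m)`-norm at most `1`. -/
def Ct (q : ℝ≥0∞) (m : Measure X) (E : Set (FiniteMeasure X)) : ℝ≥0∞ :=
  ⨆ (η : @Measure (FiniteMeasure X) (@borel (FiniteMeasure X) (taub X)))
    (_ : η Set.univ < ∞ ∧ ∃ f : X → ℝ≥0∞, Measurable f ∧
      (∀ B : Set X, MeasurableSet B → (∫⁻ μ, (μ : Measure X) B ∂η) = ∫⁻ x in B, f x ∂m) ∧
      lqNorm q m f ≤ 1),
    η E


theorem stmt4 {X : Type*} [TopologicalSpace X] [PolishSpace X] [MeasurableSpace X] [BorelSpace X]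
    (A : Set (X →ᵇ ℝ)) (hA : IsAcceptable A) :
    TopologicalSpace.induced
        (Subtype.val : {μ : FiniteMeasure X // IsProbabilityMeasure (μ : Measure X)} →
          FiniteMeasure X) (tauA X A) =
      TopologicalSpace.induced Subtype.val (taub X) := by
  apply le_antisymm
  · rw [le_iff_nhds]
    intro pt
    obtain ⟨μ0, hμ0⟩ := pt
    rw [@nhds_induced (FiniteMeasure X) _ (tauA X A) Subtype.val ⟨μ0, hμ0⟩,
      @nhds_induced (FiniteMeasure X) _ (taub X) Subtype.val ⟨μ0, hμ0⟩]
    set S := {μ : FiniteMeasure X // IsProbabilityMeasure (μ : Measure X)}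
    set L : Filter S := Filter.comap Subtype.val (@nhds _ (tauA X A) μ0) with hL
    have hnhA : @nhds _ (tauA X A) μ0 =
        ⨅ g : X →ᵇ ℝ, ⨅ _ : g ∈ A,
          Filter.comap (fun ν : FiniteMeasure X => ∫ x, g x ∂(ν : Measure X))
            (𝓝 (∫ x, g x ∂(μ0 : Measure X))) := by
      rw [tauA, _root_.nhds_iInf]
      refine iInf_congr fun g => ?_
      rw [_root_.nhds_iInf]
      exact iInf_congr fun hg => nhds_induced _ _
    have hconv : ∀ g ∈ A, Tendsto (fun i : S => ∫ x, g x ∂((i : FiniteMeasure X) : Measure X)) L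
        (𝓝 (∫ x, g x ∂(μ0 : Measure X))) := by
      intro g hg
      rw [tendsto_iff_comap]
      calc L ≤ Filter.comap Subtype.val
            (Filter.comap (fun ν : FiniteMeasure X => ∫ x, g x ∂(ν : Measure X))
              (𝓝 (∫ x, g x ∂(μ0 : Measure X)))) := by
            apply Filter.comap_mono
            rw [hnhA]
            exact iInf₂_le g hg
        _ = _ := Filter.comap_comap
    rw [taub_eq_weakTopology, ← tendsto_iff_comap]
    apply FiniteMeasure.tendsto_iff_forall_integral_tendsto.mpr
    intro f
    exact tendsto_integral_of_acceptable hA hμ0 (fun i => i.2) hconv f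
  · apply induced_mono
    rw [taub, tauA]
    exact le_iInf₂ fun g hg => iInf_le _ g


end AMPaper

end
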